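/- arXiv:2410.08457 — 2 statements merged into one kernel-verified Lean document; each statement's English description precedes it below -/
import Mathlib

section
/- Let H be a real inner product space, let η ≥ 0, G ≥ 0 be reals, let E ≥ 1 be a natural number, let w : ℕ → H be a sequence, and let q, τ be natural numbers with τ ≤ q. Suppose that for every round r with q − τ < r ≤ q there exist a finite index set N_r (a Finset over a type ι), weights γ_r : ι → ℝ with γ_r n ≥ 0 for n ∈ N_r and ∑_{n∈N_r} γ_r n = 1, and vectors g_{r,n,e} ∈ H for n ∈ N_r and 0 ≤ e < E with ‖g_{r,n,e}‖² ≤ G, such that w r − w (r−1) = −η • ∑_{n∈N_r} γ_r n • ∑_{e=0}^{E−1} g_{r,n,e}. Then ‖w q − w (q−τ)‖² ≤ τ² · η² · E² · G. -/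
/-- Deterministic form of the key staleness lemma: if each round's update between
rounds `q - τ` and `q` is `−η` times a convex combination of sums of `E` bounded
local gradient steps, then `‖w q − w (q − τ)‖² ≤ τ² * η² * E² * G`. -/
theorem staleness_deviation_bound {H : Type*} [NormedAddCommGroup H]
    [InnerProductSpace ℝ H] {ι : Type*}
    (η G : ℝ) (hη : 0 ≤ η) (hG : 0 ≤ G) (E : ℕ) (hE : 1 ≤ E)
    (w : ℕ → H) (q τ : ℕ) (hτq : τ ≤ q)
    (hupd : ∀ r, q - τ < r → r ≤ q →
      ∃ (N : Finset ι) (γ : ι → ℝ) (g : ι → ℕ → H),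
        (∀ n ∈ N, 0 ≤ γ n) ∧ (∑ n ∈ N, γ n = 1) ∧
        (∀ n ∈ N, ∀ e < E, ‖g n e‖ ^ 2 ≤ G) ∧
        w r - w (r - 1) = -η • ∑ n ∈ N, γ n • ∑ e ∈ Finset.range E, g n e) :
    ‖w q - w (q - τ)‖ ^ 2 ≤ (τ : ℝ) ^ 2 * η ^ 2 * (E : ℝ) ^ 2 * G := by
  set B : ℝ := η * (E : ℝ) * Real.sqrt G with hB
  have hBnn : 0 ≤ B := by positivity
  -- step bound
  have step : ∀ r, q - τ < r → r ≤ q → ‖w r - w (r - 1)‖ ≤ B := by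
    intro r h1 h2
    obtain ⟨N, γ, g, hγ0, hγ1, hg, heq⟩ := hupd r h1 h2
    rw [heq, norm_smul, norm_neg, Real.norm_eq_abs, abs_of_nonneg hη]
    have hsum : ‖∑ n ∈ N, γ n • ∑ e ∈ Finset.range E, g n e‖ ≤ (E : ℝ) * Real.sqrt G := by
      calc ‖∑ n ∈ N, γ n • ∑ e ∈ Finset.range E, g n e‖
          ≤ ∑ n ∈ N, ‖γ n • ∑ e ∈ Finset.range E, g n e‖ := norm_sum_le _ _
        _ ≤ ∑ n ∈ N, γ n * ((E : ℝ) * Real.sqrt G) := by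
            apply Finset.sum_le_sum
            intro n hn
            rw [norm_smul, Real.norm_eq_abs, abs_of_nonneg (hγ0 n hn)]
            apply mul_le_mul_of_nonneg_left _ (hγ0 n hn)
            calc ‖∑ e ∈ Finset.range E, g n e‖
                ≤ ∑ e ∈ Finset.range E, ‖g n e‖ := norm_sum_le _ _
              _ ≤ ∑ _e ∈ Finset.range E, Real.sqrt G := by
                  apply Finset.sum_le_sum
                  intro e he
                  have := hg n hn e (Finset.mem_range.mp he)
                  have h2 : ‖g n e‖ ≤ Real.sqrt G := by
                    rw [show Real.sqrt G = Real.sqrt G from rfl]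
                    nlinarith [Real.sq_sqrt hG, Real.sqrt_nonneg G, norm_nonneg (g n e)]
                  exact h2
              _ = (E : ℝ) * Real.sqrt G := by
                  rw [Finset.sum_const, Finset.card_range, nsmul_eq_mul]
        _ = (E : ℝ) * Real.sqrt G := by rw [← Finset.sum_mul, hγ1, one_mul]
    calc η * ‖∑ n ∈ N, γ n • ∑ e ∈ Finset.range E, g n e‖
        ≤ η * ((E : ℝ) * Real.sqrt G) := by
          exact mul_le_mul_of_nonneg_left hsum hη
      _ = B := by ring
  -- telescoping bound
  have tele : ∀ k, k ≤ τ → ‖w q - w (q - k)‖ ≤ (k : ℝ) * B := by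
    intro k
    induction k with
    | zero => intro _; simp
    | succ k ih =>
      intro hk
      have hk' : k ≤ τ := Nat.le_of_succ_le hk
      have hih := ih hk'
      have hr1 : q - τ < q - k := by omega
      have hr2 : q - k ≤ q := Nat.sub_le _ _
      have hstep := step (q - k) hr1 hr2
      have heq : q - k - 1 = q - (k + 1) := by omega
      rw [heq] at hstep
      calc ‖w q - w (q - (k + 1))‖
          = ‖(w q - w (q - k)) + (w (q - k) - w (q - (k + 1)))‖ := by rw [sub_add_sub_cancel]
        _ ≤ ‖w q - w (q - k)‖ + ‖w (q - k) - w (q - (k + 1))‖ := norm_add_le _ _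
        _ ≤ (k : ℝ) * B + B := add_le_add hih hstep
        _ = ((k + 1 : ℕ) : ℝ) * B := by push_cast; ring
  have h := tele τ le_rfl
  have hn : 0 ≤ ‖w q - w (q - τ)‖ := norm_nonneg _
  have hsq : ‖w q - w (q - τ)‖ ^ 2 ≤ ((τ : ℝ) * B) ^ 2 := by
    apply sq_le_sq' _ h
    nlinarith [mul_nonneg (Nat.cast_nonneg (α := ℝ) τ) hBnn]
  calc ‖w q - w (q - τ)‖ ^ 2 ≤ ((τ : ℝ) * B) ^ 2 := hsq
    _ = (τ : ℝ) ^ 2 * η ^ 2 * (E : ℝ) ^ 2 * (Real.sqrt G) ^ 2 := by rw [hB]; ring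
    _ = (τ : ℝ) ^ 2 * η ^ 2 * (E : ℝ) ^ 2 * G := by rw [Real.sq_sqrt hG]
end

section
/- Let d and E be natural numbers with E ≥ 1, and let η ≥ 0, L > 0, σ ≥ 0, δ ≥ 0, G ≥ 0 be reals with 4η²L²E² ≤ 1/2. Let (Ω, μ) be a probability space and write H = EuclideanSpace ℝ (Fin d). Let m : Fin d → ℝ be a binary mask (m i ∈ {0,1} for every i). Let F_n : H → ℝ be differentiable with gradient ∇F_n satisfying ‖∇F_n w − ∇F_n v‖ ≤ L‖w − v‖ for all w, v, and let F : H → ℝ be differentiable with ‖∇F_n w − ∇F w‖ ≤ δ for all w. Fix w₀ ∈ H with ‖∇F w₀‖² ≤ G. Let W : ℕ → Ω → H and G' : ℕ → Ω → H be strongly measurable with: (i) W 0 = w₀ almost everywhere; (ii) for every j < E, W (j+1) = W j − η • (m ⊙ G' j) almost everywhere; (iii) ∫ ‖G' j − ∇F_n (W j)‖² dμ ≤ σ² for every j < E; (iv) the masked noises ζ_j := m ⊙ (G' j − ∇F_n (W j)) are pairwise orthogonal in L², i.e. ∫ ⟪ζ_i, ζ_j⟫ dμ = 0 for all i ≠ j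 with i, j < E; (v) ‖W j‖² and ‖G' j‖² are μ-integrable for every j ≤ E. Then (1/E) · ∑_{e=1}^{E} ∫ ‖W (e−1) − w₀‖² dμ ≤ 4η²Eσ² + 16η²E²δ² + 16η²E²G. -/
open MeasureTheory

def hadamard {d : ℕ} (m : Fin d → ℝ) (x : EuclideanSpace ℝ (Fin d)) :
    EuclideanSpace ℝ (Fin d) :=
  WithLp.toLp 2 (fun i => m i * x i)

lemma hadamard_norm_le {d : ℕ} (m : Fin d → ℝ) (hm : ∀ i, m i = 0 ∨ m i = 1)
    (x : EuclideanSpace ℝ (Fin d)) : ‖hadamard m x‖ ≤ ‖x‖ := by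
  rw [EuclideanSpace.norm_eq, EuclideanSpace.norm_eq]
  apply Real.sqrt_le_sqrt
  apply Finset.sum_le_sum
  intro i _
  rcases hm i with h | h <;> simp [hadamard, h]
  positivity

lemma hadamard_sub {d : ℕ} (m : Fin d → ℝ) (x y : EuclideanSpace ℝ (Fin d)) :
    hadamard m (x - y) = hadamard m x - hadamard m y := by
  ext i
  simp [hadamard, mul_sub]

lemma hadamard_continuous {d : ℕ} (m : Fin d → ℝ) (hm : ∀ i, m i = 0 ∨ m i = 1) :
    Continuous (hadamard m) := by
  apply (LipschitzWith.of_dist_le_mul (K := 1) ?_).continuous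
  intro x y
  rw [dist_eq_norm, dist_eq_norm, ← hadamard_sub]
  simpa using hadamard_norm_le m hm (x - y)

lemma sq_norm_sum_le {d : ℕ} (s : Finset ℕ) (f : ℕ → EuclideanSpace ℝ (Fin d)) :
    ‖∑ k ∈ s, f k‖ ^ 2 ≤ s.card * ∑ k ∈ s, ‖f k‖ ^ 2 := by
  calc ‖∑ k ∈ s, f k‖ ^ 2 ≤ (∑ k ∈ s, ‖f k‖) ^ 2 := by
        apply pow_le_pow_left₀ (norm_nonneg _) (norm_sum_le _ _)
    _ ≤ s.card * ∑ k ∈ s, ‖f k‖ ^ 2 := sq_sum_le_card_mul_sum_sq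

lemma sq_le_two_sq {x a b : ℝ} (hx : 0 ≤ x) (h : x ≤ a + b) : x ^ 2 ≤ 2 * a ^ 2 + 2 * b ^ 2 := by
  nlinarith [sq_nonneg (a - b), mul_self_le_mul_self hx h]

set_option maxHeartbeats 1000000 in
/-- Paper's key Lemma (bounded client update): a client performing `E` local masked
SGD steps of size `η` from the received global model `w₀`, with `L`-smooth local loss
`Fn`, stochastic gradient variance at most `σ²`, data heterogeneity bounded by `δ`,
and `‖∇F w₀‖² ≤ G`, satisfies, when `4η²L²E² ≤ 1/2`,
`(1/E) ∑_{e=1}^E E‖W (e−1) − w₀‖² ≤ 4η²Eσ² + 16η²E²δ² + 16η²E²G`. -/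
theorem bounded_client_update
    (d E : ℕ) (hE : 1 ≤ E) (η L σ δ G : ℝ)
    (hη : 0 ≤ η) (hL : 0 < L) (hσ : 0 ≤ σ) (hδ : 0 ≤ δ) (hG : 0 ≤ G)
    (hstep : 4 * η ^ 2 * L ^ 2 * (E : ℝ) ^ 2 ≤ 1 / 2)
    {Ω : Type*} [MeasurableSpace Ω] (μ : Measure Ω) [IsProbabilityMeasure μ]
    (m : Fin d → ℝ) (hm : ∀ i, m i = 0 ∨ m i = 1)
    (Fn F : EuclideanSpace ℝ (Fin d) → ℝ)
    (hFn : Differentiable ℝ Fn) (hF : Differentiable ℝ F)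
    (hlip : ∀ w v, ‖gradient Fn w - gradient Fn v‖ ≤ L * ‖w - v‖)
    (hhet : ∀ w, ‖gradient Fn w - gradient F w‖ ≤ δ)
    (w₀ : EuclideanSpace ℝ (Fin d)) (hw₀ : ‖gradient F w₀‖ ^ 2 ≤ G)
    (W G' : ℕ → Ω → EuclideanSpace ℝ (Fin d))
    (hWmeas : ∀ j, StronglyMeasurable (W j))
    (hGmeas : ∀ j, StronglyMeasurable (G' j))
    (hW0 : W 0 =ᵐ[μ] fun _ => w₀)
    (hstepeq : ∀ j < E, W (j + 1) =ᵐ[μ] fun ω => W j ω - η • hadamard m (G' j ω))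
    (hvar : ∀ j < E, ∫ ω, ‖G' j ω - gradient Fn (W j ω)‖ ^ 2 ∂μ ≤ σ ^ 2)
    (horth : ∀ i j, i < E → j < E → i ≠ j →
      ∫ ω, (inner ℝ (hadamard m (G' i ω - gradient Fn (W i ω)))
              (hadamard m (G' j ω - gradient Fn (W j ω))) : ℝ) ∂μ = 0)
    (hWint : ∀ j ≤ E, Integrable (fun ω => ‖W j ω‖ ^ 2) μ)
    (hGint : ∀ j ≤ E, Integrable (fun ω => ‖G' j ω‖ ^ 2) μ) :
    (1 / (E : ℝ)) * ∑ e ∈ Finset.Icc 1 E, ∫ ω, ‖W (e - 1) ω - w₀‖ ^ 2 ∂μ ≤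
      4 * η ^ 2 * (E : ℝ) * σ ^ 2 + 16 * η ^ 2 * (E : ℝ) ^ 2 * δ ^ 2
        + 16 * η ^ 2 * (E : ℝ) ^ 2 * G := by
  have hEpos : (0 : ℝ) < E := by exact_mod_cast hE
  -- notation
  set g : ℕ → Ω → EuclideanSpace ℝ (Fin d) := fun k ω => gradient Fn (W k ω) with hg
  set ζ : ℕ → Ω → EuclideanSpace ℝ (Fin d) :=
    fun k ω => hadamard m (G' k ω - g k ω) with hζ
  set S : ℕ → ℝ := fun j => ∫ ω, ‖W j ω - w₀‖ ^ 2 ∂μ with hS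
  -- continuity of the gradient
  have gradcont : Continuous (gradient Fn) := by
    apply (LipschitzWith.of_dist_le_mul (K := Real.toNNReal L) ?_).continuous
    intro x y
    rw [dist_eq_norm, dist_eq_norm, Real.coe_toNNReal _ hL.le]
    exact hlip x y
  have hgmeas : ∀ j, StronglyMeasurable (g j) :=
    fun j => gradcont.comp_stronglyMeasurable (hWmeas j)
  have hζmeas : ∀ j, StronglyMeasurable (ζ j) := fun j =>
    (hadamard_continuous m hm).comp_stronglyMeasurable ((hGmeas j).sub (hgmeas j))
  -- integrability facts
  have intW : ∀ j ≤ E, Integrable (fun ω => ‖W j ω - w₀‖ ^ 2) μ := by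
    intro j hj
    apply Integrable.mono' (((hWint j hj).const_mul 2).add (integrable_const (2 * ‖w₀‖ ^ 2)))
    · exact (((hWmeas j).sub stronglyMeasurable_const).norm.pow 2).aestronglyMeasurable
    · filter_upwards with ω
      simp only [Pi.add_apply]
      rw [Real.norm_eq_abs, abs_of_nonneg (by positivity)]
      exact sq_le_two_sq (norm_nonneg _) (norm_sub_le _ _)
  have intg : ∀ j ≤ E, Integrable (fun ω => ‖g j ω‖ ^ 2) μ := by
    intro j hj
    apply Integrable.mono' (((intW j hj).const_mul (2 * L ^ 2)).add
      (integrable_const (2 * ‖gradient Fn w₀‖ ^ 2)))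
    · exact ((hgmeas j).norm.pow 2).aestronglyMeasurable
    · filter_upwards with ω
      simp only [Pi.add_apply]
      rw [Real.norm_eq_abs, abs_of_nonneg (by positivity)]
      have h1 : ‖g j ω - gradient Fn w₀‖ ≤ L * ‖W j ω - w₀‖ := hlip _ _
      have h2 : ‖g j ω‖ ≤ ‖g j ω - gradient Fn w₀‖ + ‖gradient Fn w₀‖ := by
        simpa using norm_add_le (g j ω - gradient Fn w₀) (gradient Fn w₀)
      have h3 : ‖g j ω‖ ≤ L * ‖W j ω - w₀‖ + ‖gradient Fn w₀‖ := by linarith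
      nlinarith [sq_le_two_sq (norm_nonneg (g j ω)) h3]
  have intD : ∀ j ≤ E, Integrable (fun ω => ‖G' j ω - g j ω‖ ^ 2) μ := by
    intro j hj
    apply Integrable.mono' (((hGint j hj).const_mul 2).add ((intg j hj).const_mul 2))
    · exact (((hGmeas j).sub (hgmeas j)).norm.pow 2).aestronglyMeasurable
    · filter_upwards with ω
      simp only [Pi.add_apply]
      rw [Real.norm_eq_abs, abs_of_nonneg (by positivity)]
      exact sq_le_two_sq (norm_nonneg _) (norm_sub_le _ _)
  have hζle : ∀ j ω, ‖ζ j ω‖ ^ 2 ≤ ‖G' j ω - g j ω‖ ^ 2 := by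
    intro j ω
    have := hadamard_norm_le m hm (G' j ω - g j ω)
    nlinarith [norm_nonneg (ζ j ω)]
  have intζ : ∀ j ≤ E, Integrable (fun ω => ‖ζ j ω‖ ^ 2) μ := by
    intro j hj
    apply Integrable.mono' (intD j hj)
    · exact ((hζmeas j).norm.pow 2).aestronglyMeasurable
    · filter_upwards with ω
      rw [Real.norm_eq_abs, abs_of_nonneg (by positivity)]
      exact hζle j ω
  have intinner : ∀ i ≤ E, ∀ j ≤ E,
      Integrable (fun ω => (inner ℝ (ζ i ω) (ζ j ω) : ℝ)) μ := by
    intro i hi j hj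
    apply Integrable.mono' ((intζ i hi).add (intζ j hj))
    · exact ((hζmeas i).inner (hζmeas j)).aestronglyMeasurable
    · filter_upwards with ω
      try simp only [Pi.add_apply]
      rw [Real.norm_eq_abs]
      have h1 := abs_real_inner_le_norm (ζ i ω) (ζ j ω)
      nlinarith [norm_nonneg (ζ i ω), norm_nonneg (ζ j ω)]
  -- variance bound on each masked noise
  have hζvar : ∀ j < E, ∫ ω, ‖ζ j ω‖ ^ 2 ∂μ ≤ σ ^ 2 := by
    intro j hj
    refine le_trans (integral_mono (intζ j hj.le) (intD j hj.le) (fun ω => hζle j ω)) (hvar j hj)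
  -- a.e. expression for the iterates
  have haeq : ∀ j ≤ E, W j =ᵐ[μ]
      fun ω => w₀ - η • ∑ k ∈ Finset.range j, hadamard m (G' k ω) := by
    intro j
    induction j with
    | zero => intro _; simpa using hW0
    | succ n ih =>
      intro hn
      have h1 := hstepeq n (by omega)
      have h2 := ih (by omega)
      filter_upwards [h1, h2] with ω e1 e2
      rw [e1, e2, Finset.sum_range_succ, smul_add, sub_sub]
  -- expected squared norm of the accumulated noise
  have hZvar : ∀ j ≤ E,
      ∫ ω, ‖∑ k ∈ Finset.range j, ζ k ω‖ ^ 2 ∂μ ≤ (j : ℝ) * σ ^ 2 := by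
    intro j hj
    have hexp : ∀ ω, ‖∑ k ∈ Finset.range j, ζ k ω‖ ^ 2 =
        ∑ i ∈ Finset.range j, ∑ k ∈ Finset.range j, (inner ℝ (ζ i ω) (ζ k ω) : ℝ) := by
      intro ω
      rw [← real_inner_self_eq_norm_sq, sum_inner]
      exact Finset.sum_congr rfl fun i _ => by rw [inner_sum]
    calc ∫ ω, ‖∑ k ∈ Finset.range j, ζ k ω‖ ^ 2 ∂μ
        = ∑ i ∈ Finset.range j, ∑ k ∈ Finset.range j,
            ∫ ω, (inner ℝ (ζ i ω) (ζ k ω) : ℝ) ∂μ := by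
          rw [MeasureTheory.integral_congr_ae (Filter.Eventually.of_forall hexp),
            integral_finset_sum _ (fun i hi => integrable_finset_sum _
              (fun k hk => intinner i (le_trans (Finset.mem_range.mp hi).le hj) k
                (le_trans (Finset.mem_range.mp hk).le hj)))]
          exact Finset.sum_congr rfl fun i hi => integral_finset_sum _
            (fun k hk => intinner i (le_trans (Finset.mem_range.mp hi).le hj) k
              (le_trans (Finset.mem_range.mp hk).le hj))
      _ = ∑ i ∈ Finset.range j, ∫ ω, ‖ζ i ω‖ ^ 2 ∂μ := by
          refine Finset.sum_congr rfl fun i hi => ?_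
          rw [Finset.sum_eq_single i]
          · exact integral_congr_ae (Filter.Eventually.of_forall
              (fun ω => real_inner_self_eq_norm_sq _))
          · intro k hk hki
            exact horth i k (lt_of_lt_of_le (Finset.mem_range.mp hi) hj)
              (lt_of_lt_of_le (Finset.mem_range.mp hk) hj) (Ne.symm hki)
          · intro h; exact absurd hi h
      _ ≤ ∑ i ∈ Finset.range j, σ ^ 2 := Finset.sum_le_sum fun i hi =>
            hζvar i (lt_of_lt_of_le (Finset.mem_range.mp hi) hj)
      _ = (j : ℝ) * σ ^ 2 := by simp [mul_comm]
  -- nonnegativity of S and total T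
  have hSnonneg : ∀ j, 0 ≤ S j := fun j => integral_nonneg (fun ω => by positivity)
  set T : ℝ := ∑ k ∈ Finset.range E, S k with hT
  have hTnonneg : 0 ≤ T := Finset.sum_nonneg fun k _ => hSnonneg k
  -- key per-step bound
  have key : ∀ j ≤ E, S j ≤ 2 * η ^ 2 * (E : ℝ) * σ ^ 2 + 4 * η ^ 2 * L ^ 2 * (E : ℝ) * T
      + 8 * η ^ 2 * (E : ℝ) ^ 2 * (δ ^ 2 + G) := by
    intro j hj
    have hjE : (j : ℝ) ≤ (E : ℝ) := by exact_mod_cast hj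
    have hjnn : (0 : ℝ) ≤ (j : ℝ) := Nat.cast_nonneg j
    -- bound on ‖∇Fn w₀‖²
    have hb0 : ‖gradient Fn w₀‖ ^ 2 ≤ 2 * δ ^ 2 + 2 * G := by
      have h1 : ‖gradient Fn w₀‖ ≤ δ + ‖gradient F w₀‖ := by
        have := hhet w₀
        have h2 : ‖gradient Fn w₀‖ ≤ ‖gradient Fn w₀ - gradient F w₀‖ + ‖gradient F w₀‖ := by
          simpa using norm_add_le (gradient Fn w₀ - gradient F w₀) (gradient F w₀)
        linarith
      nlinarith [sq_le_two_sq (norm_nonneg (gradient Fn w₀)) h1]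
    -- pointwise a.e. bound
    have hpt : ∀ᵐ ω ∂μ, ‖W j ω - w₀‖ ^ 2 ≤
        2 * η ^ 2 * ‖∑ k ∈ Finset.range j, ζ k ω‖ ^ 2
          + (4 * η ^ 2 * L ^ 2 * (j : ℝ) * (∑ k ∈ Finset.range j, ‖W k ω - w₀‖ ^ 2)
            + 4 * η ^ 2 * (j : ℝ) ^ 2 * (2 * δ ^ 2 + 2 * G)) := by
      filter_upwards [haeq j hj] with ω e1
      have hW : W j ω - w₀ = -(η • ∑ k ∈ Finset.range j, hadamard m (G' k ω)) := by
        rw [e1]; abel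
      have hsplit : ∑ k ∈ Finset.range j, hadamard m (G' k ω) =
          (∑ k ∈ Finset.range j, ζ k ω) + ∑ k ∈ Finset.range j, hadamard m (g k ω) := by
        rw [← Finset.sum_add_distrib]
        refine Finset.sum_congr rfl fun k _ => ?_
        rw [hζ]; simp only []
        rw [hadamard_sub]; abel
      -- second split : gradient drift plus initial gradient
      have hsplit2 : ∑ k ∈ Finset.range j, hadamard m (g k ω) =
          (∑ k ∈ Finset.range j, (hadamard m (g k ω) - hadamard m (gradient Fn w₀)))
            + j • hadamard m (gradient Fn w₀) := by
        rw [Finset.sum_sub_distrib]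
        simp [Finset.card_range]
      set Z := ∑ k ∈ Finset.range j, ζ k ω with hZ
      set C := ∑ k ∈ Finset.range j, (hadamard m (g k ω) - hadamard m (gradient Fn w₀)) with hC
      -- bound ‖C‖²
      have hCbound : ‖C‖ ^ 2 ≤ (j : ℝ) * L ^ 2 * ∑ k ∈ Finset.range j, ‖W k ω - w₀‖ ^ 2 := by
        refine le_trans (sq_norm_sum_le _ _) ?_
        rw [Finset.card_range, Finset.mul_sum, Finset.mul_sum]
        refine Finset.sum_le_sum fun k _ => ?_
        have h1 : ‖hadamard m (g k ω) - hadamard m (gradient Fn w₀)‖ ≤ L * ‖W k ω - w₀‖ := by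
          rw [← hadamard_sub]
          exact le_trans (hadamard_norm_le m hm _) (hlip _ _)
        nlinarith [mul_self_le_mul_self (norm_nonneg
          (hadamard m (g k ω) - hadamard m (gradient Fn w₀))) h1]
      have hb0' : ‖hadamard m (gradient Fn w₀)‖ ^ 2 ≤ 2 * δ ^ 2 + 2 * G := by
        have := hadamard_norm_le m hm (gradient Fn w₀)
        nlinarith [norm_nonneg (hadamard m (gradient Fn w₀))]
      -- combine
      have hnorm : ‖W j ω - w₀‖ ≤ η * (‖Z‖ + (‖C‖ + (j : ℝ) * ‖hadamard m (gradient Fn w₀)‖)) := by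
        rw [hW, norm_neg, norm_smul, Real.norm_eq_abs, abs_of_nonneg hη]
        refine mul_le_mul_of_nonneg_left ?_ hη
        rw [hsplit]
        refine le_trans (norm_add_le _ _) (add_le_add_right ?_ _)
        rw [hsplit2]
        refine le_trans (norm_add_le _ _) (add_le_add_right ?_ _)
        rw [← Nat.cast_smul_eq_nsmul ℝ, norm_smul, Real.norm_natCast]
      set z := ‖Z‖ with hz
      set c := ‖C‖ with hc
      set b := ‖hadamard m (gradient Fn w₀)‖ with hb
      have e1 : ‖W j ω - w₀‖ ^ 2 ≤ η ^ 2 * (z + (c + (j:ℝ) * b)) ^ 2 := by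
        nlinarith [mul_self_le_mul_self (norm_nonneg (W j ω - w₀)) hnorm]
      have e2 := mul_nonneg (sq_nonneg η) (sq_nonneg (z - (c + (j:ℝ) * b)))
      have e3 := mul_nonneg (sq_nonneg η) (sq_nonneg (c - (j:ℝ) * b))
      have e4 : η ^ 2 * c ^ 2 ≤ η ^ 2 * ((j : ℝ) * L ^ 2 *
          ∑ k ∈ Finset.range j, ‖W k ω - w₀‖ ^ 2) :=
        mul_le_mul_of_nonneg_left hCbound (sq_nonneg η)
      have e5 : η ^ 2 * (j:ℝ) ^ 2 * b ^ 2 ≤ η ^ 2 * (j:ℝ) ^ 2 * (2 * δ ^ 2 + 2 * G) :=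
        mul_le_mul_of_nonneg_left hb0' (mul_nonneg (sq_nonneg η) (sq_nonneg _))
      nlinarith [e1, e2, e3, e4, e5]
    -- integrate the pointwise bound
    have intZ : Integrable (fun ω => ‖∑ k ∈ Finset.range j, ζ k ω‖ ^ 2) μ := by
      apply Integrable.mono' (((integrable_finset_sum (Finset.range j)
        (fun k hk => intζ k (le_trans (Finset.mem_range.mp hk).le hj)))).const_mul (j : ℝ))
      · exact ((Finset.range j).stronglyMeasurable_fun_sum
          (fun k _ => hζmeas k)).norm.pow 2 |>.aestronglyMeasurable
      · filter_upwards with ω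
        rw [Real.norm_eq_abs, abs_of_nonneg (by positivity)]
        simpa [Finset.card_range] using sq_norm_sum_le (Finset.range j) (fun k => ζ k ω)
    have i1 : Integrable (fun ω => 2 * η ^ 2 * ‖∑ k ∈ Finset.range j, ζ k ω‖ ^ 2) μ :=
      intZ.const_mul _
    have i2 : Integrable (fun ω => 4 * η ^ 2 * L ^ 2 * (j : ℝ) *
        (∑ k ∈ Finset.range j, ‖W k ω - w₀‖ ^ 2)) μ :=
      (integrable_finset_sum _ (fun k hk => intW k
        (le_trans (Finset.mem_range.mp hk).le hj))).const_mul _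
    have i3 : Integrable (fun _ : Ω => 4 * η ^ 2 * (j : ℝ) ^ 2 * (2 * δ ^ 2 + 2 * G)) μ :=
      integrable_const _
    have i23 : Integrable (fun ω => 4 * η ^ 2 * L ^ 2 * (j : ℝ) *
        (∑ k ∈ Finset.range j, ‖W k ω - w₀‖ ^ 2)
          + 4 * η ^ 2 * (j : ℝ) ^ 2 * (2 * δ ^ 2 + 2 * G)) μ := by exact i2.add i3
    have intRHS : Integrable (fun ω => 2 * η ^ 2 * ‖∑ k ∈ Finset.range j, ζ k ω‖ ^ 2
        + (4 * η ^ 2 * L ^ 2 * (j : ℝ) * (∑ k ∈ Finset.range j, ‖W k ω - w₀‖ ^ 2)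
          + 4 * η ^ 2 * (j : ℝ) ^ 2 * (2 * δ ^ 2 + 2 * G))) μ := by exact i1.add i23
    have hSj : S j ≤ ∫ ω, (2 * η ^ 2 * ‖∑ k ∈ Finset.range j, ζ k ω‖ ^ 2
        + (4 * η ^ 2 * L ^ 2 * (j : ℝ) * (∑ k ∈ Finset.range j, ‖W k ω - w₀‖ ^ 2)
          + 4 * η ^ 2 * (j : ℝ) ^ 2 * (2 * δ ^ 2 + 2 * G))) ∂μ :=
      integral_mono_ae (intW j hj) intRHS hpt
    have heval : ∫ ω, (2 * η ^ 2 * ‖∑ k ∈ Finset.range j, ζ k ω‖ ^ 2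
        + (4 * η ^ 2 * L ^ 2 * (j : ℝ) * (∑ k ∈ Finset.range j, ‖W k ω - w₀‖ ^ 2)
          + 4 * η ^ 2 * (j : ℝ) ^ 2 * (2 * δ ^ 2 + 2 * G))) ∂μ =
        2 * η ^ 2 * (∫ ω, ‖∑ k ∈ Finset.range j, ζ k ω‖ ^ 2 ∂μ)
          + (4 * η ^ 2 * L ^ 2 * (j : ℝ) * (∑ k ∈ Finset.range j, S k)
            + 4 * η ^ 2 * (j : ℝ) ^ 2 * (2 * δ ^ 2 + 2 * G)) := by
      rw [integral_add i1 i23, integral_add i2 i3, integral_const_mul, integral_const_mul,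
        integral_finset_sum _ (fun k hk => intW k (le_trans (Finset.mem_range.mp hk).le hj))]
      simp [hS]
    rw [heval] at hSj
    have hsub : ∑ k ∈ Finset.range j, S k ≤ T := by
      apply Finset.sum_le_sum_of_subset_of_nonneg
        (Finset.range_subset_range.mpr hj) (fun k _ _ => hSnonneg k)
    have hZv := hZvar j hj
    have h1 : 2 * η ^ 2 * (∫ ω, ‖∑ k ∈ Finset.range j, ζ k ω‖ ^ 2 ∂μ) ≤
        2 * η ^ 2 * ((E:ℝ) * σ ^ 2) := by
      refine mul_le_mul_of_nonneg_left (le_trans hZv ?_) (by positivity)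
      exact mul_le_mul_of_nonneg_right hjE (by positivity)
    have h2 : 4 * η ^ 2 * L ^ 2 * (j : ℝ) * (∑ k ∈ Finset.range j, S k) ≤
        4 * η ^ 2 * L ^ 2 * (E : ℝ) * T := by
      have ha : 4 * η ^ 2 * L ^ 2 * (j : ℝ) * (∑ k ∈ Finset.range j, S k) ≤
          4 * η ^ 2 * L ^ 2 * (j : ℝ) * T :=
        mul_le_mul_of_nonneg_left hsub (by positivity)
      refine le_trans ha (mul_le_mul_of_nonneg_right ?_ hTnonneg)
      exact mul_le_mul_of_nonneg_left hjE (by positivity)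
    have h3 : 4 * η ^ 2 * (j : ℝ) ^ 2 * (2 * δ ^ 2 + 2 * G) ≤
        8 * η ^ 2 * (E : ℝ) ^ 2 * (δ ^ 2 + G) := by
      have h5 : (j:ℝ)^2 ≤ (E:ℝ)^2 := by exact pow_le_pow_left₀ hjnn hjE 2
      have h6 : 8*η^2*(δ^2+G) * (j:ℝ)^2 ≤ 8*η^2*(δ^2+G) * (E:ℝ)^2 :=
        mul_le_mul_of_nonneg_left h5 (by positivity)
      linarith only [h6]
    calc S j ≤ _ := hSj
      _ ≤ 2 * η ^ 2 * (E : ℝ) * σ ^ 2 + 4 * η ^ 2 * L ^ 2 * (E : ℝ) * T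
          + 8 * η ^ 2 * (E : ℝ) ^ 2 * (δ ^ 2 + G) := by
        linarith only [h1, h2, h3]
  -- sum the per-step bound
  have hTbound : T ≤ (E : ℝ) * (2 * η ^ 2 * (E : ℝ) * σ ^ 2
      + 8 * η ^ 2 * (E : ℝ) ^ 2 * (δ ^ 2 + G)) + 4 * η ^ 2 * L ^ 2 * (E : ℝ) ^ 2 * T := by
    have : T ≤ ∑ k ∈ Finset.range E, (2 * η ^ 2 * (E : ℝ) * σ ^ 2
        + 4 * η ^ 2 * L ^ 2 * (E : ℝ) * T + 8 * η ^ 2 * (E : ℝ) ^ 2 * (δ ^ 2 + G)) := by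
      exact Finset.sum_le_sum fun k hk => key k (Finset.mem_range.mp hk).le
    rw [Finset.sum_const, Finset.card_range, nsmul_eq_mul] at this
    nlinarith
  -- solve the recursion
  have hTfinal : (1 / (E : ℝ)) * T ≤ 4 * η ^ 2 * (E : ℝ) * σ ^ 2
      + 16 * η ^ 2 * (E : ℝ) ^ 2 * δ ^ 2 + 16 * η ^ 2 * (E : ℝ) ^ 2 * G := by
    have half : 4 * η ^ 2 * L ^ 2 * (E : ℝ) ^ 2 * T ≤ (1 / 2) * T :=
      mul_le_mul_of_nonneg_right hstep hTnonneg
    have hT2 : T ≤ (E : ℝ) * (2 * η ^ 2 * (E : ℝ) * σ ^ 2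
        + 8 * η ^ 2 * (E : ℝ) ^ 2 * (δ ^ 2 + G)) + (1/2) * T := le_trans hTbound
      (by linarith)
    have hT3 : T ≤ 2 * (E : ℝ) * (2 * η ^ 2 * (E : ℝ) * σ ^ 2
        + 8 * η ^ 2 * (E : ℝ) ^ 2 * (δ ^ 2 + G)) := by linarith
    rw [div_mul_eq_mul_div, one_mul, div_le_iff₀ hEpos]
    calc T ≤ _ := hT3
      _ = (4 * η ^ 2 * (E : ℝ) * σ ^ 2 + 16 * η ^ 2 * (E : ℝ) ^ 2 * δ ^ 2
          + 16 * η ^ 2 * (E : ℝ) ^ 2 * G) * (E : ℝ) := by ring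
  -- reindex the goal sum
  have hreindex : ∑ e ∈ Finset.Icc 1 E, (∫ ω, ‖W (e - 1) ω - w₀‖ ^ 2 ∂μ) = T := by
    rw [hT, show Finset.Icc 1 E = Finset.Ico 1 (E+1) from by rw [Finset.Ico_add_one_right_eq_Icc],
      Finset.sum_Ico_eq_sum_range]
    simp [hS]
  rw [hreindex]
  exact hTfinal
end
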